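/- arXiv:1701.04880 — 4 statements merged into one kernel-verified Lean document; each statement's English description precedes it below -/
import Mathlib

section
/- For α ≥ 0, k a nonnegative integer, and γ > 0, the integral ∫_α^∞ x^k · exp(−(log(x−α))²/(2γ²)) dx equals γ√(2π) · Σ_{i=0}^{k} C(k,i) · α^{k−i} · exp((i+1)²γ²/2). -/
open Real MeasureTheory

lemma gauss_shift_integral {γ : ℝ} (hγ : 0 < γ) (a : ℝ) :
    ∫ t : ℝ, Real.exp (a * t) * Real.exp (-t ^ 2 / (2 * γ ^ 2)) =
      γ * Real.sqrt (2 * Real.pi) * Real.exp (a ^ 2 * γ ^ 2 / 2) := by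
  have hb : (0 : ℝ) < 1 / (2 * γ ^ 2) := by positivity
  have key : ∀ t : ℝ, Real.exp (a * t) * Real.exp (-t ^ 2 / (2 * γ ^ 2)) =
      Real.exp (a ^ 2 * γ ^ 2 / 2) *
        Real.exp (-(1 / (2 * γ ^ 2)) * (t - a * γ ^ 2) ^ 2) := by
    intro t
    rw [← Real.exp_add, ← Real.exp_add]
    congr 1
    field_simp
    ring
  simp only [key]
  rw [MeasureTheory.integral_const_mul]
  have : ∫ t : ℝ, Real.exp (-(1 / (2 * γ ^ 2)) * (t - a * γ ^ 2) ^ 2) =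
      ∫ t : ℝ, Real.exp (-(1 / (2 * γ ^ 2)) * t ^ 2) :=
    MeasureTheory.integral_sub_right_eq_self
      (fun t => Real.exp (-(1 / (2 * γ ^ 2)) * t ^ 2)) (a * γ ^ 2)
  rw [this, integral_gaussian]
  have : Real.pi / (1 / (2 * γ ^ 2)) = 2 * Real.pi * γ ^ 2 := by
    field_simp
  rw [this]
  rw [show 2 * Real.pi * γ ^ 2 = (2 * Real.pi) * γ ^ 2 by ring,
    Real.sqrt_mul (by positivity), Real.sqrt_sq hγ.le]
  ring

lemma gauss_shift_integrable {γ : ℝ} (hγ : 0 < γ) (a : ℝ) :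
    Integrable (fun t : ℝ => Real.exp (a * t) * Real.exp (-t ^ 2 / (2 * γ ^ 2))) := by
  have hb : (0 : ℝ) < 1 / (2 * γ ^ 2) := by positivity
  have key : ∀ t : ℝ, Real.exp (a * t) * Real.exp (-t ^ 2 / (2 * γ ^ 2)) =
      Real.exp (a ^ 2 * γ ^ 2 / 2) *
        Real.exp (-(1 / (2 * γ ^ 2)) * (t - a * γ ^ 2) ^ 2) := by
    intro t
    rw [← Real.exp_add, ← Real.exp_add]
    congr 1
    field_simp
    ring
  simp only [key]
  exact ((integrable_exp_neg_mul_sq hb).comp_sub_right (a * γ ^ 2)).const_mul _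

theorem gels_normalizing_integral (α γ : ℝ) (k : ℕ) (hα : 0 ≤ α) (hγ : 0 < γ) :
    ∫ x in Set.Ioi α, x ^ k * Real.exp (-(Real.log (x - α)) ^ 2 / (2 * γ ^ 2)) =
      γ * Real.sqrt (2 * Real.pi) *
        ∑ i ∈ Finset.range (k + 1),
          (k.choose i : ℝ) * α ^ (k - i) * Real.exp (((i : ℝ) + 1) ^ 2 * γ ^ 2 / 2) := by
  set φ : ℝ → ℝ := fun t => α + Real.exp t with hφ
  have himg : φ '' Set.univ = Set.Ioi α := by
    rw [Set.image_univ]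
    ext x
    simp only [Set.mem_range, Set.mem_Ioi, hφ]
    constructor
    · rintro ⟨t, rfl⟩; simpa using Real.exp_pos t
    · intro hx
      exact ⟨Real.log (x - α), by rw [Real.exp_log (by linarith)]; ring⟩
  have hderiv : ∀ t ∈ Set.univ, HasDerivWithinAt φ (Real.exp t) Set.univ t :=
    fun t _ => (Real.hasDerivAt_exp t).const_add α |>.hasDerivWithinAt
  have hinj : Set.InjOn φ Set.univ := fun a _ b _ h =>
    Real.exp_injective (by simpa [hφ] using h)
  have step1 :
      ∫ x in Set.Ioi α, x ^ k * Real.exp (-(Real.log (x - α)) ^ 2 / (2 * γ ^ 2)) =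
        ∫ t : ℝ, Real.exp t * ((α + Real.exp t) ^ k *
          Real.exp (-t ^ 2 / (2 * γ ^ 2))) := by
    rw [← himg,
      integral_image_eq_integral_abs_deriv_smul MeasurableSet.univ hderiv hinj]
    rw [MeasureTheory.setIntegral_univ]
    congr 1
    ext t
    rw [abs_of_pos (Real.exp_pos t), smul_eq_mul]
    congr 2
    rw [hφ]
    simp [Real.log_exp]
  rw [step1]
  have expand : ∀ t : ℝ, Real.exp t * ((α + Real.exp t) ^ k *
      Real.exp (-t ^ 2 / (2 * γ ^ 2))) =
      ∑ i ∈ Finset.range (k + 1),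
        (k.choose i : ℝ) * α ^ (k - i) *
          (Real.exp (((i : ℝ) + 1) * t) * Real.exp (-t ^ 2 / (2 * γ ^ 2))) := by
    intro t
    rw [add_comm α (Real.exp t), add_pow, Finset.sum_mul, Finset.mul_sum]
    apply Finset.sum_congr rfl
    intro i hi
    have : Real.exp (((i : ℝ) + 1) * t) = Real.exp t ^ i * Real.exp t := by
      rw [← Real.exp_nat_mul, ← Real.exp_add]
      congr 1
      ring
    rw [this]
    ring
  simp only [expand]
  rw [MeasureTheory.integral_finset_sum]
  · rw [Finset.mul_sum]
    apply Finset.sum_congr rfl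
    intro i hi
    rw [MeasureTheory.integral_const_mul, gauss_shift_integral hγ]
    ring
  · intro i _
    exact (gauss_shift_integrable hγ ((i : ℝ) + 1)).const_mul _
end

section
/- For α ≥ 0, k a nonnegative integer, γ > 0, and x > α, ∫_α^x w^k · exp(−(log(w−α))²/(2γ²)) dw = γ√(2π) · Σ_{i=0}^{k} C(k,i) · α^{k−i} · exp((i+1)²γ²/2) · Φ((log(x−α) − (i+1)γ²)/γ), where Φ is the standard normal cdf. -/
open Real MeasureTheory

/-- The standard normal cumulative distribution function. -/
noncomputable def stdNormalCdf (t : ℝ) : ℝ :=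
  (Real.sqrt (2 * Real.pi))⁻¹ * ∫ u in Set.Iic t, Real.exp (-u ^ 2 / 2)

lemma exp_image_Iic (γ L : ℝ) (hγ : 0 < γ) :
    (fun u : ℝ => Real.exp (γ * u)) '' Set.Iic L = Set.Ioc 0 (Real.exp (γ * L)) := by
  ext y
  constructor
  · rintro ⟨u, hu, rfl⟩
    exact ⟨Real.exp_pos _, Real.exp_le_exp.2 (by nlinarith [Set.mem_Iic.1 hu])⟩
  · rintro ⟨hy0, hy⟩
    refine ⟨Real.log y / γ, ?_, ?_⟩
    · rw [Set.mem_Iic, div_le_iff₀ hγ]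
      have := Real.log_le_log hy0 hy
      rw [Real.log_exp] at this
      linarith [this]
    · show Real.exp (γ * (Real.log y / γ)) = y
      rw [mul_div_cancel₀ _ hγ.ne', Real.exp_log hy0]

lemma per_term (γ X : ℝ) (i : ℕ) (hγ : 0 < γ) (hX : 0 < X) :
    ∫ t in Set.Ioc 0 X, t ^ i * Real.exp (-(Real.log t) ^ 2 / (2 * γ ^ 2)) =
      γ * Real.exp (((i : ℝ) + 1) ^ 2 * γ ^ 2 / 2) *
        ∫ v in Set.Iic ((Real.log X - ((i : ℝ) + 1) * γ ^ 2) / γ), Real.exp (-v ^ 2 / 2) := by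
  set L : ℝ := Real.log X / γ with hL
  have hXL : X = Real.exp (γ * L) := by
    rw [hL, mul_div_cancel₀ _ hγ.ne', Real.exp_log hX]
  set c : ℝ := ((i : ℝ) + 1) * γ with hc
  have himg : Set.Ioc (0:ℝ) X = (fun u : ℝ => Real.exp (γ * u)) '' Set.Iic L := by
    rw [exp_image_Iic γ L hγ, ← hXL]
  have hderiv : ∀ u ∈ Set.Iic L,
      HasDerivWithinAt (fun u : ℝ => Real.exp (γ * u)) (γ * Real.exp (γ * u)) (Set.Iic L) u := by
    intro u _
    have h0 : HasDerivAt (fun u : ℝ => γ * u) γ u := by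
      simpa using (hasDerivAt_id u).const_mul γ
    have : HasDerivAt (fun u : ℝ => Real.exp (γ * u)) (Real.exp (γ * u) * γ) u :=
      (Real.hasDerivAt_exp (γ * u)).comp u h0
    exact (this.hasDerivWithinAt).congr_deriv (mul_comm _ _)
  have hinj : Set.InjOn (fun u : ℝ => Real.exp (γ * u)) (Set.Iic L) := by
    intro a _ b _ hab
    have := Real.exp_injective hab
    exact mul_left_cancel₀ hγ.ne' this
  rw [himg, integral_image_eq_integral_abs_deriv_smul measurableSet_Iic hderiv hinj]
  have hstep : ∀ u : ℝ, |γ * Real.exp (γ * u)| •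
      (Real.exp (γ * u) ^ i * Real.exp (-(Real.log (Real.exp (γ * u))) ^ 2 / (2 * γ ^ 2))) =
      (γ * Real.exp (c ^ 2 / 2)) * Real.exp (-(u - c) ^ 2 / 2) := by
    intro u
    rw [abs_of_pos (by positivity), Real.log_exp, smul_eq_mul, ← Real.exp_nat_mul,
      mul_assoc, ← Real.exp_add, ← Real.exp_add, mul_assoc, ← Real.exp_add]
    congr 1
    have hγ2 : γ ^ 2 ≠ 0 := by positivity
    field_simp [hc]
    rw [hc]; congr 1; ring
  simp only [hstep]
  rw [MeasureTheory.integral_const_mul]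
  have htr : ∫ u in Set.Iic L, Real.exp (-(u - c) ^ 2 / 2)
      = ∫ v in Set.Iic (L - c), Real.exp (-v ^ 2 / 2) := by
    have h := (measurePreserving_sub_right (volume : Measure ℝ) c).setIntegral_preimage_emb
      (MeasurableEquiv.subRight c).measurableEmbedding
      (fun v => Real.exp (-v ^ 2 / 2)) (Set.Iic (L - c))
    rw [← h]
    congr 1
    ext u
    simp [sub_le_sub_iff_right]
  rw [htr]
  have h1 : L - c = (Real.log X - ((i : ℝ) + 1) * γ ^ 2) / γ := by
    rw [hL, hc]; field_simp
  have h2 : c ^ 2 / 2 = ((i : ℝ) + 1) ^ 2 * γ ^ 2 / 2 := by rw [hc]; ring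
  rw [h1, h2, mul_assoc]

theorem gels_cdf_integral (α γ x : ℝ) (k : ℕ) (hα : 0 ≤ α) (hγ : 0 < γ) (hx : α < x) :
    ∫ w in α..x, w ^ k * Real.exp (-(Real.log (w - α)) ^ 2 / (2 * γ ^ 2)) =
      γ * Real.sqrt (2 * Real.pi) *
        ∑ i ∈ Finset.range (k + 1),
          (k.choose i : ℝ) * α ^ (k - i) * Real.exp (((i : ℝ) + 1) ^ 2 * γ ^ 2 / 2) *
            stdNormalCdf ((Real.log (x - α) - ((i : ℝ) + 1) * γ ^ 2) / γ) := by
  have hX : 0 < x - α := sub_pos.2 hx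
  rw [intervalIntegral.integral_of_le hx.le]
  -- step 1 : shift by α
  have hshift : ∫ w in Set.Ioc α x, w ^ k * Real.exp (-(Real.log (w - α)) ^ 2 / (2 * γ ^ 2))
      = ∫ t in Set.Ioc (0:ℝ) (x - α),
          (t + α) ^ k * Real.exp (-(Real.log t) ^ 2 / (2 * γ ^ 2)) := by
    have h := (measurePreserving_add_right (volume : Measure ℝ) α).setIntegral_preimage_emb
      (MeasurableEquiv.addRight α).measurableEmbedding
      (fun w => w ^ k * Real.exp (-(Real.log (w - α)) ^ 2 / (2 * γ ^ 2))) (Set.Ioc α x)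
    rw [← h]
    have hset : (fun t : ℝ => t + α) ⁻¹' Set.Ioc α x = Set.Ioc 0 (x - α) := by
      ext t
      simp [Set.mem_Ioc, lt_add_iff_pos_left, le_sub_iff_add_le]
    show ∫ t in (fun t : ℝ => t + α) ⁻¹' Set.Ioc α x,
        (t + α) ^ k * Real.exp (-(Real.log (t + α - α)) ^ 2 / (2 * γ ^ 2)) = _
    rw [hset]
    congr 1
    funext t
    rw [add_sub_cancel_right]
  rw [hshift]
  -- step 2 : binomial expansion
  have hbin : ∀ t : ℝ, (t + α) ^ k * Real.exp (-(Real.log t) ^ 2 / (2 * γ ^ 2)) =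
      ∑ i ∈ Finset.range (k + 1), (k.choose i : ℝ) * α ^ (k - i) *
        (t ^ i * Real.exp (-(Real.log t) ^ 2 / (2 * γ ^ 2))) := by
    intro t
    rw [add_pow, Finset.sum_mul]
    exact Finset.sum_congr rfl fun i _ => by ring
  have hmeas : ∀ i : ℕ, AEStronglyMeasurable
      (fun t : ℝ => t ^ i * Real.exp (-(Real.log t) ^ 2 / (2 * γ ^ 2)))
      (volume : Measure ℝ) := by
    intro i
    exact ((measurable_id.pow_const i).mul
      ((Real.measurable_log.pow_const 2).neg.div_const _).exp).aestronglyMeasurable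
  have hint : ∀ i ∈ Finset.range (k + 1), IntegrableOn
      (fun t : ℝ => (k.choose i : ℝ) * α ^ (k - i) *
        (t ^ i * Real.exp (-(Real.log t) ^ 2 / (2 * γ ^ 2)))) (Set.Ioc 0 (x - α)) := by
    intro i _
    apply Integrable.const_mul
    apply Measure.integrableOn_of_bounded (M := (x - α) ^ i) measure_Ioc_lt_top.ne (hmeas i)
    filter_upwards [ae_restrict_mem measurableSet_Ioc] with t ht
    have h1 : t ^ i ≤ (x - α) ^ i := pow_le_pow_left₀ ht.1.le ht.2 i
    have h2 : Real.exp (-(Real.log t) ^ 2 / (2 * γ ^ 2)) ≤ 1 :=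
      Real.exp_le_one_iff.2 (div_nonpos_of_nonpos_of_nonneg (neg_nonpos.2 (sq_nonneg _)) (by positivity))
    rw [Real.norm_eq_abs, abs_of_nonneg (mul_nonneg (pow_nonneg ht.1.le i) (Real.exp_pos _).le)]
    calc t ^ i * Real.exp (-(Real.log t) ^ 2 / (2 * γ ^ 2))
        ≤ t ^ i * 1 := by
          exact mul_le_mul_of_nonneg_left h2 (pow_nonneg ht.1.le i)
      _ ≤ (x - α) ^ i := by rw [mul_one]; exact h1
  calc ∫ t in Set.Ioc (0:ℝ) (x - α), (t + α) ^ k * Real.exp (-(Real.log t) ^ 2 / (2 * γ ^ 2))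
      = ∫ t in Set.Ioc (0:ℝ) (x - α), ∑ i ∈ Finset.range (k + 1),
          (k.choose i : ℝ) * α ^ (k - i) *
            (t ^ i * Real.exp (-(Real.log t) ^ 2 / (2 * γ ^ 2))) := by
        simp only [hbin]
    _ = ∑ i ∈ Finset.range (k + 1), ∫ t in Set.Ioc (0:ℝ) (x - α),
          (k.choose i : ℝ) * α ^ (k - i) *
            (t ^ i * Real.exp (-(Real.log t) ^ 2 / (2 * γ ^ 2))) :=
        integral_finset_sum _ hint
    _ = γ * Real.sqrt (2 * Real.pi) * ∑ i ∈ Finset.range (k + 1),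
          (k.choose i : ℝ) * α ^ (k - i) * Real.exp (((i : ℝ) + 1) ^ 2 * γ ^ 2 / 2) *
            stdNormalCdf ((Real.log (x - α) - ((i : ℝ) + 1) * γ ^ 2) / γ) := by
        rw [Finset.mul_sum]
        refine Finset.sum_congr rfl fun i _ => ?_
        rw [MeasureTheory.integral_const_mul, per_term γ (x - α) i hγ hX]
        have hs : Real.sqrt (2 * Real.pi) ≠ 0 := by positivity
        rw [stdNormalCdf]
        field_simp
end

section
/- For α ≥ 0, k a nonnegative integer, γ > 0, and x > α, ∫_x^∞ w^k · exp(−(log(w−α))²/(2γ²)) dw = γ√(2π) · Σ_{i=0}^{k} C(k,i) · α^{k−i} · exp((i+1)²γ²/2) · Φ(−(log(x−α) − (i+1)γ²)/γ). -/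
open Real MeasureTheory

open Set Filter

-- translation on Ioi
lemma integral_comp_sub_right_Ioi (g : ℝ → ℝ) (a d : ℝ) :
    ∫ t in Ioi a, g (t - d) = ∫ s in Ioi (a - d), g s := by
  rw [← integral_indicator measurableSet_Ioi, ← integral_indicator measurableSet_Ioi,
    ← integral_add_right_eq_self ((Ioi (a - d)).indicator g) (-d)]
  congr 1
  ext t
  simp only [indicator, mem_Ioi, ← sub_eq_add_neg]
  by_cases h : a < t <;> simp [h, sub_lt_sub_iff_right]

lemma exp_quad (b γ t : ℝ) (hγ : γ ≠ 0) :
    b * t - t ^ 2 / (2 * γ ^ 2) = b ^ 2 * γ ^ 2 / 2 - (t - b * γ ^ 2) ^ 2 / (2 * γ ^ 2) := by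
  field_simp
  ring

lemma integrable_gauss (b : ℝ) {γ : ℝ} (hγ : 0 < γ) :
    Integrable (fun t : ℝ => Real.exp (b * t - t ^ 2 / (2 * γ ^ 2))) := by
  have h : Integrable (fun t : ℝ => Real.exp (-(2 * γ ^ 2)⁻¹ * t ^ 2)) :=
    integrable_exp_neg_mul_sq (by positivity)
  have h2 := (h.comp_sub_right (b * γ ^ 2)).const_mul (Real.exp (b ^ 2 * γ ^ 2 / 2))
  refine h2.congr (Filter.Eventually.of_forall fun t => ?_)
  simp only
  rw [← Real.exp_add]
  congr 1
  rw [exp_quad b γ t hγ.ne']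
  ring

lemma gauss_int (b : ℝ) {γ : ℝ} (L : ℝ) (hγ : 0 < γ) :
    ∫ t in Ioi L, Real.exp (b * t - t ^ 2 / (2 * γ ^ 2)) =
      γ * Real.sqrt (2 * Real.pi) * Real.exp (b ^ 2 * γ ^ 2 / 2) *
        stdNormalCdf (-((L - b * γ ^ 2) / γ)) := by
  have h1 : ∀ t : ℝ, Real.exp (b * t - t ^ 2 / (2 * γ ^ 2)) =
      Real.exp (b ^ 2 * γ ^ 2 / 2) * Real.exp (-(t - b * γ ^ 2) ^ 2 / (2 * γ ^ 2)) := by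
    intro t
    rw [← Real.exp_add]
    congr 1
    rw [exp_quad b γ t hγ.ne']
    ring
  simp_rw [h1]
  rw [MeasureTheory.integral_const_mul, integral_comp_sub_right_Ioi
    (fun s => Real.exp (-s ^ 2 / (2 * γ ^ 2))) L (b * γ ^ 2)]
  have h2 : ∀ s : ℝ, Real.exp (-s ^ 2 / (2 * γ ^ 2)) =
      (fun u => Real.exp (-u ^ 2 / 2)) (s * γ⁻¹) := by
    intro s
    simp only
    congr 1
    field_simp
  simp_rw [h2]
  rw [integral_comp_mul_right_Ioi (fun u => Real.exp (-u ^ 2 / 2)) _ (inv_pos.mpr hγ)]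
  have h3 : ∫ u in Ioi ((L - b * γ ^ 2) * γ⁻¹), Real.exp (-u ^ 2 / 2) =
      ∫ u in Iic (-((L - b * γ ^ 2) * γ⁻¹)), Real.exp (-u ^ 2 / 2) := by
    rw [← integral_comp_neg_Ioi]
    simp [neg_sq]
  rw [h3]
  rw [stdNormalCdf]
  have hs : Real.sqrt (2 * Real.pi) ≠ 0 := by positivity
  rw [inv_inv, smul_eq_mul]
  field_simp

lemma subst_key (α : ℝ) {γ x : ℝ} (i : ℕ) (hγ : 0 < γ) (hx : α < x) :
    (∫ w in Ioi x, (w - α) ^ i * Real.exp (-(Real.log (w - α)) ^ 2 / (2 * γ ^ 2))) =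
      ∫ t in Ioi (Real.log (x - α)), Real.exp ((((i : ℝ) + 1)) * t - t ^ 2 / (2 * γ ^ 2)) ∧
    IntegrableOn (fun w => (w - α) ^ i * Real.exp (-(Real.log (w - α)) ^ 2 / (2 * γ ^ 2)))
      (Ici x) := by
  set a := Real.log (x - α) with ha
  set f : ℝ → ℝ := fun t => α + Real.exp t with hf
  set g : ℝ → ℝ := fun w => (w - α) ^ i * Real.exp (-(Real.log (w - α)) ^ 2 / (2 * γ ^ 2))
    with hg
  have hfa : f a = x := by
    simp only [hf, ha, Real.exp_log (sub_pos.mpr hx)]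
    ring
  have hcomp : ∀ t : ℝ, g (f t) * Real.exp t =
      Real.exp ((((i : ℝ) + 1)) * t - t ^ 2 / (2 * γ ^ 2)) := by
    intro t
    simp only [hg, hf, add_sub_cancel_left, Real.log_exp]
    rw [← Real.exp_nat_mul, ← Real.exp_add, ← Real.exp_add]
    congr 1
    push_cast
    ring
  have hderiv : ∀ (s : Set ℝ) (t : ℝ), HasDerivWithinAt f (Real.exp t) s t :=
    fun s t => ((Real.hasDerivAt_exp t).const_add α).hasDerivWithinAt
  have hinj : Function.Injective f := fun s t h => by
    simpa [hf, Real.exp_eq_exp] using h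
  have hgauss : Integrable (fun t : ℝ =>
      Real.exp ((((i : ℝ) + 1)) * t - t ^ 2 / (2 * γ ^ 2))) := integrable_gauss _ hγ
  have hg1 : IntegrableOn g (f '' Ici a) := by
    rw [integrableOn_image_iff_integrableOn_abs_deriv_smul measurableSet_Ici
      (fun t _ => hderiv (Ici a) t) (hinj.injOn) g]
    refine (hgauss.integrableOn).congr_fun (fun t _ => ?_) measurableSet_Ici
    simp only [smul_eq_mul, abs_of_pos (Real.exp_pos t)]
    rw [mul_comm (Real.exp t), hcomp t]
  have himage : Ici x ⊆ f '' Ici a := by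
    intro w hw
    refine ⟨Real.log (w - α), ?_, ?_⟩
    · exact Real.log_le_log (sub_pos.mpr hx) (by simpa using hw)
    · simp only [hf, Real.exp_log (sub_pos.mpr (lt_of_lt_of_le hx hw))]
      ring
  have hIci : IntegrableOn g (Ici x) := hg1.mono_set himage
  constructor
  · have hcont_g : ContinuousOn g (Ioi α) := by
      have h1 : ContinuousOn (fun w : ℝ => Real.log (w - α)) (Ioi α) :=
        ContinuousOn.log (continuousOn_id.sub continuousOn_const)
          (fun w hw => sub_ne_zero.mpr (ne_of_gt hw))
      exact ((continuousOn_id.sub continuousOn_const).pow i).mul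
        (((((h1.pow 2).neg).div_const _)).rexp)
    have himage2 : f '' Ioi a ⊆ Ioi α := by
      rintro w ⟨t, _, rfl⟩
      simpa [hf] using Real.exp_pos t
    have := integral_comp_mul_deriv_Ioi (f' := fun t => Real.exp t) (g := g) (a := a)
      (Continuous.continuousOn (by continuity)) ?_ (fun t _ => hderiv _ t)
      (hcont_g.mono himage2) hg1 ?_
    · rw [hfa] at this
      rw [← this]
      refine setIntegral_congr_fun measurableSet_Ioi (fun t _ => ?_)
      simp only [Function.comp]
      rw [hcomp t]
    · exact tendsto_atTop_add_const_left _ α Real.tendsto_exp_atTop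
    · refine (hgauss.integrableOn).congr_fun (fun t _ => ?_) measurableSet_Ici
      simp only [Function.comp]
      rw [hcomp t]
  · exact hIci

theorem gels_sf_integral (α γ x : ℝ) (k : ℕ) (hα : 0 ≤ α) (hγ : 0 < γ) (hx : α < x) :
    ∫ w in Set.Ioi x, w ^ k * Real.exp (-(Real.log (w - α)) ^ 2 / (2 * γ ^ 2)) =
      γ * Real.sqrt (2 * Real.pi) *
        ∑ i ∈ Finset.range (k + 1),
          (k.choose i : ℝ) * α ^ (k - i) * Real.exp (((i : ℝ) + 1) ^ 2 * γ ^ 2 / 2) *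
            stdNormalCdf (-((Real.log (x - α) - ((i : ℝ) + 1) * γ ^ 2) / γ)) := by
  have expand : ∀ w : ℝ, w ^ k * Real.exp (-(Real.log (w - α)) ^ 2 / (2 * γ ^ 2)) =
      ∑ i ∈ Finset.range (k + 1), (k.choose i : ℝ) * α ^ (k - i) *
        ((w - α) ^ i * Real.exp (-(Real.log (w - α)) ^ 2 / (2 * γ ^ 2))) := by
    intro w
    have : w ^ k = ((w - α) + α) ^ k := by ring_nf
    rw [this, add_pow, Finset.sum_mul]
    refine Finset.sum_congr rfl fun i _ => ?_
    ring
  rw [setIntegral_congr_fun measurableSet_Ioi (fun w _ => expand w)]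
  rw [integral_finset_sum _ (fun i _ =>
    ((((subst_key α i hγ hx).2).mono_set Ioi_subset_Ici_self).const_mul _))]
  rw [Finset.mul_sum]
  refine Finset.sum_congr rfl fun i _ => ?_
  rw [MeasureTheory.integral_const_mul, (subst_key α i hγ hx).1, gauss_int ((i : ℝ) + 1) _ hγ]
  ring
end

section
/- Let X be a random variable with density f(x) = C · x^k · exp(−(log(x−α))²/(2γ²)) on (α, ∞), where α ≥ 0, k is a nonnegative integer, γ > 0, and C = (γ√(2π) · Σ_{i=0}^{k} C(k,i) α^{k−i} e^{(i+1)²γ²/2})^{−1}. Then for every nonnegative integer n, E[X^n] = Cγ√(2π) · Σ_{i=0}^{n+k} C(n+k,i) · α^{n+k−i} · e^{(i+1)²γ²/2}. -/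
open Real MeasureTheory
open scoped ENNReal NNReal


lemma sq_rewrite (γ a : ℝ) (hγ : 0 < γ) (u : ℝ) :
    -(u^2)/(2*γ^2) + a*u = -(1/(2*γ^2)) * (u - γ^2*a)^2 + a^2*γ^2/2 := by
  field_simp; ring

lemma integ_aux (γ a : ℝ) (hγ : 0 < γ) :
    Integrable (fun u : ℝ => Real.exp (-(u^2)/(2*γ^2) + a*u)) := by
  have hb : (0:ℝ) < 1/(2*γ^2) := by positivity
  simp_rw [sq_rewrite γ a hγ, Real.exp_add]
  exact (((integrable_exp_neg_mul_sq hb).comp_sub_right (γ^2*a)).mul_const _)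

lemma gauss_lin (γ a : ℝ) (hγ : 0 < γ) :
    ∫ u : ℝ, Real.exp (-(u^2)/(2*γ^2) + a*u)
      = γ * Real.sqrt (2*Real.pi) * Real.exp (a^2*γ^2/2) := by
  have hb : (0:ℝ) < 1/(2*γ^2) := by positivity
  simp_rw [sq_rewrite γ a hγ, Real.exp_add, integral_mul_const]
  rw [integral_sub_right_eq_self (μ := volume) (fun v => Real.exp (-(1/(2*γ^2)) * v^2)) (γ^2*a),
    integral_gaussian]
  have h1 : Real.pi / (1/(2*γ^2)) = γ^2 * (2*Real.pi) := by field_simp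
  rw [h1, Real.sqrt_mul (sq_nonneg γ), Real.sqrt_sq hγ.le]

lemma cov (α : ℝ) (g : ℝ → ℝ) :
    ∫ x in Set.Ioi α, g x = ∫ u : ℝ, Real.exp u * g (α + Real.exp u) := by
  have himg : (fun u : ℝ => α + Real.exp u) '' Set.univ = Set.Ioi α := by
    ext x
    simp only [Set.image_univ, Set.mem_range, Set.mem_Ioi]
    constructor
    · rintro ⟨u, rfl⟩; linarith [Real.exp_pos u]
    · intro hx; exact ⟨Real.log (x - α), by rw [Real.exp_log (by linarith)]; ring⟩
  have hd : ∀ u ∈ Set.univ, HasDerivWithinAt (fun u : ℝ => α + Real.exp u)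
      (Real.exp u) Set.univ u :=
    fun u _ => ((Real.hasDerivAt_exp u).const_add α).hasDerivWithinAt
  have hinj : Set.InjOn (fun u : ℝ => α + Real.exp u) Set.univ := by
    intro a _ b _ h
    simp only at h
    exact Real.exp_injective (by linarith)
  calc ∫ x in Set.Ioi α, g x
      = ∫ u in Set.univ, |Real.exp u| • g (α + Real.exp u) := by
        rw [← himg, integral_image_eq_integral_abs_deriv_smul MeasurableSet.univ hd hinj]
    _ = ∫ u : ℝ, Real.exp u * g (α + Real.exp u) := by
        rw [Measure.restrict_univ]
        simp only [abs_of_pos (Real.exp_pos _), smul_eq_mul]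

lemma key_integral (α γ : ℝ) (hγ : 0 < γ) (m : ℕ) :
    ∫ x in Set.Ioi α, x ^ m * Real.exp (-(Real.log (x - α)) ^ 2 / (2 * γ ^ 2))
      = γ * Real.sqrt (2 * Real.pi) * ∑ i ∈ Finset.range (m + 1),
          (m.choose i : ℝ) * α ^ (m - i) * Real.exp (((i : ℝ) + 1) ^ 2 * γ ^ 2 / 2) := by
  rw [cov α (fun x => x ^ m * Real.exp (-(Real.log (x - α)) ^ 2 / (2 * γ ^ 2)))]
  have hsimp : ∀ u : ℝ, Real.exp u * ((α + Real.exp u) ^ m *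
      Real.exp (-(Real.log (α + Real.exp u - α)) ^ 2 / (2 * γ ^ 2)))
      = ∑ i ∈ Finset.range (m + 1), (m.choose i : ℝ) * α ^ (m - i) *
          Real.exp (-(u^2)/(2*γ^2) + ((i : ℝ) + 1) * u) := by
    intro u
    rw [add_sub_cancel_left, Real.log_exp, add_comm α (Real.exp u), add_pow,
      Finset.sum_mul, Finset.mul_sum]
    refine Finset.sum_congr rfl fun i hi => ?_
    rw [show -(u^2)/(2*γ^2) + ((i : ℝ) + 1) * u = -(u^2)/(2*γ^2) + (i : ℝ)*u + u by ring,
      Real.exp_add, Real.exp_add, show Real.exp ((i:ℝ)*u) = Real.exp u ^ i by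
        rw [← Real.exp_nat_mul]]
    ring
  simp_rw [hsimp]
  rw [integral_finset_sum (Finset.range (m+1))
    (f := fun (i : ℕ) (u : ℝ) => (m.choose i : ℝ) * α ^ (m - i) *
      Real.exp (-(u^2)/(2*γ^2) + ((i : ℝ) + 1) * u))
    (fun i _ => ((integ_aux γ ((i:ℝ)+1) hγ).const_mul _))]
  simp_rw [integral_const_mul, gauss_lin γ _ hγ, Finset.mul_sum]
  exact Finset.sum_congr rfl fun i _ => by ring

theorem gels_moments {Ω : Type*} [MeasurableSpace Ω] (ℙ : Measure Ω) [IsProbabilityMeasure ℙ]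
    (X : Ω → ℝ) (hX : Measurable X) (α γ C : ℝ) (k : ℕ) (hα : 0 ≤ α) (hγ : 0 < γ)
    (hC : C = (γ * Real.sqrt (2 * Real.pi) *
      ∑ i ∈ Finset.range (k + 1),
        (k.choose i : ℝ) * α ^ (k - i) * Real.exp (((i : ℝ) + 1) ^ 2 * γ ^ 2 / 2))⁻¹)
    (hpdf : Measure.map X ℙ = volume.withDensity (fun x => ENNReal.ofReal
      (Set.indicator (Set.Ioi α)
        (fun x => C * x ^ k * Real.exp (-(Real.log (x - α)) ^ 2 / (2 * γ ^ 2))) x))) :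
    ∀ n : ℕ, ∫ ω, (X ω) ^ n ∂ℙ =
      C * γ * Real.sqrt (2 * Real.pi) *
        ∑ i ∈ Finset.range (n + k + 1),
          ((n + k).choose i : ℝ) * α ^ (n + k - i) *
            Real.exp (((i : ℝ) + 1) ^ 2 * γ ^ 2 / 2) := by
  -- C is nonnegative
  have hS : 0 < ∑ i ∈ Finset.range (k + 1),
      (k.choose i : ℝ) * α ^ (k - i) * Real.exp (((i : ℝ) + 1) ^ 2 * γ ^ 2 / 2) := by
    refine Finset.sum_pos' (fun i _ => by positivity) ⟨k, Finset.self_mem_range_succ k, ?_⟩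
    simp only [Nat.choose_self, Nat.cast_one, Nat.sub_self, pow_zero, one_mul, mul_one]
    positivity
  have hC0 : 0 ≤ C := by
    rw [hC]
    have : 0 < γ * Real.sqrt (2 * Real.pi) *
        ∑ i ∈ Finset.range (k + 1),
          (k.choose i : ℝ) * α ^ (k - i) * Real.exp (((i : ℝ) + 1) ^ 2 * γ ^ 2 / 2) := by
      have h2 : 0 < Real.sqrt (2 * Real.pi) := Real.sqrt_pos.mpr (by positivity)
      exact mul_pos (mul_pos hγ h2) hS
    exact (inv_pos.mpr this).le
  intro n
  set F : ℝ → ℝ := fun x => C * x ^ k * Real.exp (-(Real.log (x - α)) ^ 2 / (2 * γ ^ 2)) with hF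
  have hFmeas : Measurable F := by
    apply Measurable.mul
    · exact (measurable_const.mul (measurable_id.pow_const k))
    · exact (((measurable_id.sub_const α).log.pow_const 2).neg.div_const _).exp
  have hind_nonneg : ∀ x, 0 ≤ Set.indicator (Set.Ioi α) F x := by
    intro x
    apply Set.indicator_nonneg
    intro y hy
    have hy0 : 0 ≤ y := le_trans hα (le_of_lt hy)
    positivity
  have hmeasNN : Measurable (fun x => (Set.indicator (Set.Ioi α) F x).toNNReal) :=
    measurable_real_toNNReal.comp (hFmeas.indicator measurableSet_Ioi)
  have step1 : ∫ ω, (X ω) ^ n ∂ℙ = ∫ x, x ^ n ∂(Measure.map X ℙ) :=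
    (integral_map hX.aemeasurable
      ((measurable_id.pow_const n).aestronglyMeasurable)).symm
  rw [step1, hpdf]
  have hofReal : (fun x => ENNReal.ofReal (Set.indicator (Set.Ioi α) F x))
      = fun x => ((fun x => (Set.indicator (Set.Ioi α) F x).toNNReal) x : ℝ≥0∞) := rfl
  rw [hofReal, integral_withDensity_eq_integral_smul hmeasNN]
  have hsmul : ∀ x : ℝ, ((Set.indicator (Set.Ioi α) F x).toNNReal) • x ^ n
      = Set.indicator (Set.Ioi α) (fun x => F x * x ^ n) x := by
    intro x
    rw [NNReal.smul_def, smul_eq_mul, Real.coe_toNNReal _ (hind_nonneg x)]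
    by_cases hx : x ∈ Set.Ioi α
    · rw [Set.indicator_of_mem hx, Set.indicator_of_mem hx]
    · rw [Set.indicator_of_notMem hx, Set.indicator_of_notMem hx, zero_mul]
  simp_rw [hsmul]
  rw [integral_indicator measurableSet_Ioi]
  have hintegrand : ∀ x : ℝ, F x * x ^ n
      = C * (x ^ (n + k) * Real.exp (-(Real.log (x - α)) ^ 2 / (2 * γ ^ 2))) := by
    intro x
    rw [hF, pow_add]
    ring
  simp_rw [hintegrand]
  rw [integral_const_mul, key_integral α γ hγ (n + k)]
  ring
end
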